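/- Let N, r, q ≥ 1, let F ∈ ℝ^{N×r} with F'F invertible, let Y ∈ ℝ^{N×q}, and set Â := (F'F)⁻¹ F' Y ∈ ℝ^{r×q} (the ordinary least squares coefficient matrix). Then for every A ∈ ℝ^{r×q}, det( (Y − FÂ)'(Y − FÂ) ) ≤ det( (Y − FA)'(Y − FA) ); that is, in the multivariate regression model the coefficient matrix minimizing the determinant of the residual cross-product matrix coincides with the least squares estimator. -/

import Mathlib

open Matrix RealInnerProductSpace

noncomputable section

lemma psd_det_nonneg {n : Type*} [Fintype n] [DecidableEq n] {A : Matrix n n ℝ}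
    (hA : A.PosSemidef) : 0 ≤ A.det := by
  rw [hA.1.det_eq_prod_eigenvalues]
  exact Finset.prod_nonneg fun i _ => by exact_mod_cast hA.eigenvalues_nonneg i

lemma one_le_det_one_add {n : Type*} [Fintype n] [DecidableEq n] {C : Matrix n n ℝ}
    (hC : C.PosSemidef) : 1 ≤ (1 + C).det := by
  have hH : (1 + C).IsHermitian := Matrix.isHermitian_one.add hC.1
  rw [hH.det_eq_prod_eigenvalues]
  calc (1:ℝ) = ∏ _i : n, 1 := by simp
  _ ≤ ∏ i, (hH.eigenvalues i : ℝ) := by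
      apply Finset.prod_le_prod (by simp)
      intro i _
      have hvnorm : ‖hH.eigenvectorBasis i‖ = 1 := hH.eigenvectorBasis.orthonormal.1 i
      have h1 : star (WithLp.equiv 2 (n → ℝ) (hH.eigenvectorBasis i)) ⬝ᵥ
          (WithLp.equiv 2 (n → ℝ) (hH.eigenvectorBasis i)) = 1 := by
        simp only [WithLp.equiv_apply]
        rw [dotProduct_comm, ← EuclideanSpace.inner_eq_star_dotProduct, real_inner_self_eq_norm_sq, hvnorm]
        norm_num
      have h2 : 0 ≤ star (WithLp.equiv 2 (n → ℝ) (hH.eigenvectorBasis i)) ⬝ᵥ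
          (C *ᵥ (WithLp.equiv 2 (n → ℝ) (hH.eigenvectorBasis i))) := hC.dotProduct_mulVec_nonneg _
      rw [hH.eigenvalues_eq i]
      simp only [add_mulVec, one_mulVec, dotProduct_add, RCLike.re_to_real]
      simp only [WithLp.equiv_apply] at h1 h2
      rw [h1]
      linarith

open scoped MatrixOrder in
lemma psd_det_le_det_add {n : Type*} [Fintype n] [DecidableEq n] {A B : Matrix n n ℝ}
    (hA : A.PosSemidef) (hB : B.PosSemidef) : A.det ≤ (A + B).det := by
  by_cases h : IsUnit A.det
  case neg =>
    have : A.det = 0 := by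
      by_contra h0; exact h (isUnit_iff_ne_zero.mpr h0)
    rw [this]
    exact psd_det_nonneg (hA.add hB)
  case pos =>
    set S := CFC.sqrt A with hS
    have hSS : S * S = A := CFC.sqrt_mul_sqrt_self A hA.nonneg
    have hSdet : IsUnit S.det := by
      have : S.det * S.det = A.det := by rw [← det_mul, hSS]
      rcases h with ⟨u, hu⟩
      exact isUnit_iff_ne_zero.mpr (fun h0 => by
        simp [h0] at this
        exact u.ne_zero (by rw [hu, ← this]))
    have hSH : S.IsHermitian := (CFC.sqrt_nonneg A).posSemidef.1
    have hSiH : (S⁻¹).IsHermitian := hSH.inv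
    set C := S⁻¹ * B * S⁻¹ with hC
    have hCps : C.PosSemidef := by
      have := hB.mul_mul_conjTranspose_same S⁻¹
      rwa [hSiH.eq] at this
    have key : A + B = S * (1 + C) * S := by
      rw [mul_add, add_mul, mul_one, hSS]
      congr 1
      rw [hC, show S * (S⁻¹ * B * S⁻¹) * S = (S * S⁻¹) * B * (S⁻¹ * S) by simp only [Matrix.mul_assoc],
        mul_nonsing_inv S hSdet, nonsing_inv_mul S hSdet, one_mul, mul_one]
    rw [key, det_mul, det_mul]
    have hdetA : A.det = S.det * S.det := by rw [← det_mul, hSS]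
    rw [show S.det * (1 + C).det * S.det = S.det * S.det * (1 + C).det by ring, ← hdetA]
    exact le_mul_of_one_le_right (psd_det_nonneg hA) (one_le_det_one_add hCps)

theorem ols_minimizes_determinant_of_residual_crossproduct
    {N r q : ℕ} (hN : 1 ≤ N) (hr : 1 ≤ r) (hq : 1 ≤ q)
    (F : Matrix (Fin N) (Fin r) ℝ) (hF : IsUnit (Fᵀ * F).det)
    (Y : Matrix (Fin N) (Fin q) ℝ) :
    ∀ A : Matrix (Fin r) (Fin q) ℝ,
      ((Y - F * ((Fᵀ * F)⁻¹ * Fᵀ * Y))ᵀ * (Y - F * ((Fᵀ * F)⁻¹ * Fᵀ * Y))).det ≤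
      ((Y - F * A)ᵀ * (Y - F * A)).det := by
  intro A
  set P : Matrix (Fin r) (Fin q) ℝ := (Fᵀ * F)⁻¹ * Fᵀ * Y with hP
  set E : Matrix (Fin N) (Fin q) ℝ := Y - F * P with hE
  have hFE : Fᵀ * E = 0 := by
    rw [hE, Matrix.mul_sub, hP, ← Matrix.mul_assoc, Matrix.mul_assoc ((Fᵀ * F)⁻¹),
      ← Matrix.mul_assoc (Fᵀ * F), Matrix.mul_nonsing_inv _ hF, Matrix.one_mul, sub_self]
  set G : Matrix (Fin N) (Fin q) ℝ := F * (P - A) with hG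
  have hdecomp : Y - F * A = E + G := by
    rw [hE, hG, Matrix.mul_sub]
    abel
  have hGE : Gᵀ * E = 0 := by
    rw [hG, transpose_mul, Matrix.mul_assoc, hFE, Matrix.mul_zero]
  have hEG : Eᵀ * G = 0 := by
    have := congrArg transpose hGE
    rwa [transpose_mul, transpose_transpose, transpose_zero] at this
  have expand : (Y - F * A)ᵀ * (Y - F * A) = Eᵀ * E + Gᵀ * G := by
    rw [hdecomp, transpose_add, Matrix.add_mul, Matrix.mul_add, Matrix.mul_add,
      hEG, hGE, add_zero, zero_add]
  have hctE : Eᵀ = Eᴴ := (Matrix.conjTranspose_eq_transpose_of_trivial E).symm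
  have hctG : Gᵀ = Gᴴ := (Matrix.conjTranspose_eq_transpose_of_trivial G).symm
  have hEps : (Eᵀ * E).PosSemidef := by
    rw [hctE]; exact posSemidef_conjTranspose_mul_self E
  have hGps : (Gᵀ * G).PosSemidef := by
    rw [hctG]; exact posSemidef_conjTranspose_mul_self G
  rw [expand]
  exact psd_det_le_det_add hEps hGps
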